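/- For every integer p ≥ 2, the limit as K → ∞ of Λ_p(K) := ∑_{ℓ=0}^{K−p} ℓ(K−ℓ−1)/(K(K−ℓ)·2^{K−ℓ}) equals −ln 2 + 2^{1−p} + ∑_{n=1}^{p−1} 1/(n·2^n). -/

import Mathlib

open Filter Finset

/-- For every integer `p ≥ 2`,
`Λ_p(K) := ∑_{ℓ=0}^{K−p} ℓ(K−ℓ−1)/(K(K−ℓ)·2^{K−ℓ})` tends, as `K → ∞`, to
`−ln 2 + 2^{1−p} + ∑_{n=1}^{p−1} 1/(n·2^n)`. -/
theorem stmt_5 (p : ℕ) (hp : 2 ≤ p) :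
    Tendsto
      (fun K : ℕ => ∑ ℓ ∈ Finset.range (K - p + 1),
        (ℓ : ℝ) * ((K : ℝ) - ℓ - 1) / ((K : ℝ) * ((K : ℝ) - ℓ) * 2 ^ (K - ℓ)))
      atTop
      (nhds (-Real.log 2 + (2 : ℝ) ^ ((1 : ℤ) - p) +
        ∑ n ∈ Finset.range (p - 1), 1 / (((n : ℝ) + 1) * 2 ^ (n + 1)))) := by
  set a : ℕ → ℝ := fun j => ((p : ℝ) + j - 1) / (((p : ℝ) + j) * 2 ^ (p + j)) with ha
  set b : ℕ → ℝ := fun j => ((p : ℝ) + j - 1) / 2 ^ (p + j) with hbdef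
  set L : ℝ := -Real.log 2 + (2 : ℝ) ^ ((1 : ℤ) - p) +
    ∑ n ∈ Finset.range (p - 1), 1 / (((n : ℝ) + 1) * 2 ^ (n + 1)) with hL
  -- HasSum for the geometric part
  have hgeo : HasSum (fun j : ℕ => ((1:ℝ)/2) ^ (p + j)) ((2:ℝ) ^ ((1:ℤ) - p)) := by
    have h0 : HasSum (fun j : ℕ => ((1:ℝ)/2) ^ j) 2 := by
      have := hasSum_geometric_of_lt_one (r := (1:ℝ)/2) (by norm_num) (by norm_num)
      norm_num at this
      exact this
    have h1 := h0.mul_left (((1:ℝ)/2) ^ p)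
    have h2 : (fun j : ℕ => ((1:ℝ)/2) ^ p * ((1:ℝ)/2) ^ j) = fun j : ℕ => ((1:ℝ)/2) ^ (p + j) := by
      funext j; rw [← pow_add]
    rw [h2] at h1
    convert h1 using 1
    · exact rfl
    rw [zpow_sub₀ (by norm_num : (2:ℝ) ≠ 0)]
    rw [zpow_natCast, zpow_one, one_div, inv_pow]
    ring
  -- HasSum for the log part
  have hlog : HasSum (fun n : ℕ => ((1:ℝ)/2) ^ (n + 1) / (n + 1)) (Real.log 2) := by
    have := Real.hasSum_pow_div_log_of_abs_lt_one (x := (1:ℝ)/2) (by rw [abs_of_pos] <;> norm_num)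
    norm_num at this
    have hl : -Real.log (1/2) = Real.log 2 := by rw [one_div, Real.log_inv, neg_neg]
    rw [hl] at this
    exact this
  have hlogtail : HasSum (fun j : ℕ => ((1:ℝ)/2) ^ (p + j) / ((p : ℝ) + j))
      (Real.log 2 - ∑ n ∈ Finset.range (p - 1), 1 / (((n : ℝ) + 1) * 2 ^ (n + 1))) := by
    have h := (hasSum_nat_add_iff' (f := fun n : ℕ => ((1:ℝ)/2) ^ (n + 1) / (n + 1)) (p - 1)).mpr hlog
    have he : (fun n : ℕ => ((1:ℝ)/2) ^ (n + (p - 1) + 1) / ((n + (p - 1) : ℕ) + 1)) =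
        fun j : ℕ => ((1:ℝ)/2) ^ (p + j) / ((p : ℝ) + j) := by
      funext j
      have h1 : j + (p - 1) + 1 = p + j := by omega
      rw [h1]
      congr 1
      push_cast [Nat.cast_sub (by omega : 1 ≤ p)]
      ring
    rw [he] at h
    convert h using 2
    · exact rfl
    apply Finset.sum_congr rfl
    intro n _
    rw [div_pow, one_pow, div_div]
    ring
  -- HasSum a L
  have hA : HasSum a L := by
    have h := hgeo.sub hlogtail
    have he : (fun j : ℕ => ((1:ℝ)/2) ^ (p + j) - ((1:ℝ)/2) ^ (p + j) / ((p : ℝ) + j)) = a := by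
      funext j
      have hpj : (0:ℝ) < (p : ℝ) + j := by positivity
      have h2 : (0:ℝ) < (2:ℝ) ^ (p + j) := by positivity
      rw [ha]
      rw [div_pow, one_pow]
      field_simp
      try simp
      try tauto
    rw [he] at h
    convert h using 1
    · exact rfl
    rw [hL]; ring
  -- Summable b
  have hB : Summable b := by
    have h1 : Summable (fun j : ℕ => ((j : ℝ) + p) * ((1:ℝ)/2) ^ (j + p)) := by
      have hs : Summable (fun n : ℕ => (n : ℝ) * ((1:ℝ)/2) ^ n) := by
        have := summable_pow_mul_geometric_of_norm_lt_one (R := ℝ) 1 (r := (1:ℝ)/2)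
          (by rw [Real.norm_of_nonneg] <;> norm_num)
        simpa using this
      have := (summable_nat_add_iff (f := fun n : ℕ => (n : ℝ) * ((1:ℝ)/2) ^ n) p).mpr hs
      simpa using this
    have h2 : Summable (fun j : ℕ => ((1:ℝ)/2) ^ (j + p)) := by
      have := (summable_nat_add_iff (f := fun n : ℕ => ((1:ℝ)/2) ^ n) p).mpr
        (summable_geometric_of_lt_one (by norm_num) (by norm_num))
      simpa using this
    have h := h1.sub h2
    apply h.congr
    intro j
    have h2' : (0:ℝ) < (2:ℝ) ^ (j + p) := by positivity
    simp only [hbdef]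
    rw [div_pow, one_pow, add_comm p j]
    field_simp
    ring
  -- partial sums of b tend to tsum
  have hBt : Tendsto (fun n : ℕ => ∑ j ∈ Finset.range n, b j) atTop (nhds (∑' j, b j)) :=
    hB.hasSum.tendsto_sum_nat
  -- auxiliary tendsto of K ↦ K - p + 1
  have hKp : Tendsto (fun K : ℕ => K - p + 1) atTop atTop :=
    tendsto_atTop_atTop.mpr fun n => ⟨n + p, fun K hK => by omega⟩
  -- the main function eventually equals A - B
  have key : ∀ K : ℕ, p ≤ K →
      (∑ ℓ ∈ Finset.range (K - p + 1),
        (ℓ : ℝ) * ((K : ℝ) - ℓ - 1) / ((K : ℝ) * ((K : ℝ) - ℓ) * 2 ^ (K - ℓ)))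
      = (∑ j ∈ Finset.range (K - p + 1), a j)
        - (∑ j ∈ Finset.range (K - p + 1), b j) / K := by
    intro K hK
    rw [← Finset.sum_range_reflect]
    rw [Finset.sum_div, ← Finset.sum_sub_distrib]
    apply Finset.sum_congr rfl
    intro j hj
    simp only [Finset.mem_range] at hj
    have hj' : j ≤ K - p := by omega
    have e0 : K - p + 1 - 1 - j = K - (p + j) := by omega
    rw [e0]
    have e1 : K - (K - (p + j)) = p + j := by omega
    rw [e1]
    have e2 : ((K - (p + j) : ℕ) : ℝ) = (K : ℝ) - ((p : ℝ) + j) := by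
      push_cast [Nat.cast_sub (by omega : p + j ≤ K)]
      ring
    rw [e2]
    have hKpos : (0:ℝ) < (K : ℝ) := by
      have : 0 < K := by omega
      exact_mod_cast this
    have hpj : (0:ℝ) < (p : ℝ) + j := by positivity
    have h2 : (0:ℝ) < (2:ℝ) ^ (p + j) := by positivity
    rw [show (K:ℝ) - ((K:ℝ) - ((p:ℝ) + j)) = (p:ℝ) + j by ring]
    rw [ha, hbdef]
    field_simp
  have heq : (fun K : ℕ => ∑ ℓ ∈ Finset.range (K - p + 1),
        (ℓ : ℝ) * ((K : ℝ) - ℓ - 1) / ((K : ℝ) * ((K : ℝ) - ℓ) * 2 ^ (K - ℓ)))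
      =ᶠ[atTop] fun K : ℕ => (∑ j ∈ Finset.range (K - p + 1), a j)
        - (∑ j ∈ Finset.range (K - p + 1), b j) / K := by
    filter_upwards [eventually_ge_atTop p] with K hK using key K hK
  rw [show (nhds (-Real.log 2 + (2 : ℝ) ^ ((1 : ℤ) - p) +
        ∑ n ∈ Finset.range (p - 1), 1 / (((n : ℝ) + 1) * 2 ^ (n + 1)))) = nhds L from rfl]
  apply Tendsto.congr' heq.symm
  have t1 : Tendsto (fun K : ℕ => ∑ j ∈ Finset.range (K - p + 1), a j) atTop (nhds L) :=
    (hA.tendsto_sum_nat).comp hKp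
  have t2 : Tendsto (fun K : ℕ => (∑ j ∈ Finset.range (K - p + 1), b j) / K) atTop (nhds 0) := by
    have h1 : Tendsto (fun K : ℕ => ∑ j ∈ Finset.range (K - p + 1), b j) atTop (nhds (∑' j, b j)) :=
      hBt.comp hKp
    have h2 : Tendsto (fun K : ℕ => (K : ℝ)⁻¹) atTop (nhds 0) :=
      tendsto_inv_atTop_nhds_zero_nat
    have := h1.mul h2
    rw [mul_zero] at this
    exact this.congr fun K => by rw [div_eq_mul_inv]
  have := t1.sub t2
  rw [sub_zero] at this
  exact this
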